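/- Under the linearization I_i(x + δ_i) = I_i(x) + H_i(x)ᵀδ_i, the minimum over (δ₁,…,δ_m) ∈ N⁺ of Σ_{i=1}^m l_i I_i(x + α_i δ_i) (with the convex-combination structure of N⁺) equals Σ_{i=1}^m l_i I_i(x) - ε · max_{t ∈ {1,…,m}} ‖H_t(x)‖₂. Consequently, for any perturbation set N with N⁻ ⊆ N ⊆ N⁺, the minimum over N of the linearized objective equals the same value Σ l_i I_i(x) - ε max_t ‖H_t(x)‖₂. -/

import Mathlib

open scoped RealInnerProductSpace

/-- Minimum of the linearized objective over `N⁺` equals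
`Σ l_i I_i(x) - ε max_t ‖H_t(x)‖₂`, and consequently the same value is attained
as minimum over any perturbation set `N` with `N⁻ ⊆ N ⊆ N⁺`. -/
theorem min_linearized_over_Nplus_and_sandwich
    {n m : ℕ} (hm : 0 < m) (ε : ℝ) (hε : 0 < ε)
    (l : Fin m → ℝ) (hl : ∀ i, l i = 1 ∨ l i = -1)
    (I : Fin m → ℝ) (H : Fin m → EuclideanSpace ℝ (Fin n))
    (Nminus Nplus : Set (Fin m → EuclideanSpace ℝ (Fin n)))
    (hNminus : Nminus = {d | ∃ i : Fin m, ‖d i‖ ≤ ε ∧ ∀ t : Fin m, t ≠ i → d t = 0})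
    (hNplus : Nplus = {d | ∃ (α : Fin m → ℝ) (δ : Fin m → EuclideanSpace ℝ (Fin n)),
        (∑ i, α i) = 1 ∧ (∀ i, 0 ≤ α i) ∧ (∀ i, ‖δ i‖ ≤ ε) ∧ ∀ i, d i = α i • δ i}) :
    sInf {r : ℝ | ∃ d ∈ Nplus, r = ∑ i, l i * (I i + ⟪H i, d i⟫)} =
      (∑ i, l i * I i) -
        ε * Finset.univ.sup' (Finset.univ_nonempty_iff.mpr
          (Fin.pos_iff_nonempty.mp hm)) (fun t => ‖H t‖) ∧
    ∀ N : Set (Fin m → EuclideanSpace ℝ (Fin n)), Nminus ⊆ N → N ⊆ Nplus →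
      sInf {r : ℝ | ∃ d ∈ N, r = ∑ i, l i * (I i + ⟪H i, d i⟫)} =
        (∑ i, l i * I i) -
          ε * Finset.univ.sup' (Finset.univ_nonempty_iff.mpr
            (Fin.pos_iff_nonempty.mp hm)) (fun t => ‖H t‖) := by
  set M : ℝ := Finset.univ.sup' (Finset.univ_nonempty_iff.mpr
          (Fin.pos_iff_nonempty.mp hm)) (fun t => ‖H t‖) with hMdef
  have habs : ∀ i, |l i| = 1 := by
    intro i; rcases hl i with h | h <;> simp [h]
  obtain ⟨t, -, htM⟩ := Finset.exists_mem_eq_sup' (Finset.univ_nonempty_iff.mpr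
          (Fin.pos_iff_nonempty.mp hm)) (fun t => ‖H t‖)
  have hMle : ∀ i, ‖H i‖ ≤ M := by
    intro i; rw [hMdef]; exact Finset.le_sup' (fun t => ‖H t‖) (Finset.mem_univ i)
  have hM0 : 0 ≤ M := le_trans (norm_nonneg _) (hMle t)
  set d₀ : Fin m → EuclideanSpace ℝ (Fin n) :=
    fun j => if j = t then ((-(l t)) * ε / ‖H t‖) • H t else 0 with hd₀def
  have hd₀mem : d₀ ∈ Nminus := by
    rw [hNminus]
    refine ⟨t, ?_, fun s hs => by simp [hd₀def, hs]⟩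
    simp only [hd₀def, if_pos rfl]
    rw [norm_smul]
    have : ‖(-(l t)) * ε / ‖H t‖‖ = ε / ‖H t‖ := by
      rw [Real.norm_eq_abs, abs_div, abs_mul, abs_neg, habs t, one_mul,
        abs_of_pos hε, abs_of_nonneg (norm_nonneg _)]
    rw [this]
    rcases eq_or_ne ‖H t‖ 0 with h | h
    · simp [h, le_of_lt hε]
    · rw [div_mul_cancel₀ _ h]
  have hd₀val : (∑ i, l i * (I i + ⟪H i, d₀ i⟫)) = (∑ i, l i * I i) - ε * M := by
    have hsum : (∑ i, l i * (I i + ⟪H i, d₀ i⟫))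
        = (∑ i, l i * I i) + ∑ i, l i * ⟪H i, d₀ i⟫ := by
      rw [← Finset.sum_add_distrib]; congr 1; ext i; ring
    have hsingle : (∑ i, l i * ⟪H i, d₀ i⟫) = l t * ⟪H t, d₀ t⟫ := by
      refine Finset.sum_eq_single t (fun i _ hi => ?_) (by simp)
      simp [hd₀def, hi]
    have hval : l t * ⟪H t, d₀ t⟫ = -(ε * M) := by
      simp only [hd₀def, if_pos rfl, real_inner_smul_right]
      rw [real_inner_self_eq_norm_sq, hMdef, htM]
      rcases eq_or_ne ‖H t‖ 0 with h | h
      · simp [h]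
      · have hsq : l t * l t = 1 := by rcases hl t with h' | h' <;> simp [h']
        field_simp
        rw [sq, hsq]
    rw [hsum, hsingle, hval]; ring
  have key : ∀ N : Set (Fin m → EuclideanSpace ℝ (Fin n)), Nminus ⊆ N → N ⊆ Nplus →
      sInf {r : ℝ | ∃ d ∈ N, r = ∑ i, l i * (I i + ⟪H i, d i⟫)}
        = (∑ i, l i * I i) - ε * M := by
    intro N h1 h2
    have hlb : ∀ r ∈ {r : ℝ | ∃ d ∈ N, r = ∑ i, l i * (I i + ⟪H i, d i⟫)},
        (∑ i, l i * I i) - ε * M ≤ r := by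
      rintro r ⟨d, hdN, rfl⟩
      obtain ⟨α, δ, hα1, hα0, hδ, hd⟩ := hNplus ▸ h2 hdN
      have hsum : (∑ i, l i * (I i + ⟪H i, d i⟫))
          = (∑ i, l i * I i) + ∑ i, α i * (l i * ⟪H i, δ i⟫) := by
        rw [← Finset.sum_add_distrib]; congr 1; ext i
        rw [hd i, real_inner_smul_right]; ring
      rw [hsum, sub_eq_add_neg]
      refine (add_le_add_iff_left _).mpr ?_
      have : ∀ i : Fin m, α i * (-(ε * M)) ≤ α i * (l i * ⟪H i, δ i⟫) := by
        intro i
        refine mul_le_mul_of_nonneg_left ?_ (hα0 i)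
        have h1' : |l i * ⟪H i, δ i⟫| ≤ ε * M := by
          rw [abs_mul, habs i, one_mul]
          calc |⟪H i, δ i⟫| ≤ ‖H i‖ * ‖δ i‖ := abs_real_inner_le_norm _ _
            _ ≤ M * ε := mul_le_mul (hMle i) (hδ i) (norm_nonneg _) hM0
            _ = ε * M := mul_comm _ _
        linarith [neg_abs_le (l i * ⟪H i, δ i⟫)]
      calc -(ε * M) = (∑ i, α i) * (-(ε * M)) := by rw [hα1, one_mul]
        _ = ∑ i, α i * (-(ε * M)) := Finset.sum_mul _ _ _
        _ ≤ ∑ i, α i * (l i * ⟪H i, δ i⟫) := Finset.sum_le_sum (fun i _ => this i)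
    have hmem : ((∑ i, l i * I i) - ε * M)
        ∈ {r : ℝ | ∃ d ∈ N, r = ∑ i, l i * (I i + ⟪H i, d i⟫)} :=
      ⟨d₀, h1 hd₀mem, hd₀val.symm⟩
    exact le_antisymm (csInf_le ⟨_, hlb⟩ hmem) (le_csInf ⟨_, hmem⟩ hlb)
  have hsub : Nminus ⊆ Nplus := by
    rw [hNminus, hNplus]
    rintro d ⟨i, hdi, hz⟩
    refine ⟨fun j => if j = i then 1 else 0, fun j => if j = i then d i else 0,
      by simp, fun j => by by_cases h : j = i <;> simp [h],
      fun j => by by_cases h : j = i <;> simp [h, hdi, le_of_lt hε], fun j => ?_⟩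
    by_cases h : j = i
    · simp [h]
    · simp [h, hz j h]
  exact ⟨key Nplus hsub le_rfl, key⟩
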